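/- In the point-hyperplane incidence bipartite graph of PG(5, GF(2)), there is no induced bipartite subgraph with 10 points and 10 hyperplanes in which every point lies on at least 8 of the 10 hyperplanes and every hyperplane contains at least 8 of the 10 points. -/

import Mathlib

open Module
open scoped Classical

namespace PG52Aux

open Finset Submodule

/-! ### Small `ZMod 2` facts -/

lemma zmod2_cases (a : ZMod 2) : a = 0 ∨ a = 1 := by revert a; decide

lemma zmod2_ne_zero {a : ZMod 2} (h : a ≠ 0) : a = 1 := by
  rcases zmod2_cases a with h0 | h1
  · exact absurd h0 h
  · exact h1

lemma zmod2_add_eq_zero {a b : ZMod 2} (h : a + b = 0) : a = b := by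
  revert a b; decide

/-! ### Parity / saturation -/

section Graph

variable {X ι : Type*} [Fintype X] [DecidableEq X] [DecidableEq ι]

lemma sum_apply_eq_card (D : Finset ι) (c : ι → X → ZMod 2) (x : X) :
    (∑ i ∈ D, c i) x = ((D.filter (fun i => c i x ≠ 0)).card : ZMod 2) := by
  classical
  rw [Finset.sum_apply]
  rw [← Finset.sum_filter_ne_zero D (f := fun i => c i x)]
  have h1 : ∀ i ∈ D.filter (fun i => c i x ≠ 0), c i x = 1 := by
    intro i hi
    exact zmod2_ne_zero (Finset.mem_filter.1 hi).2
  rw [Finset.sum_congr rfl h1]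
  simp

/-- If a subfamily sums to zero, then at every coordinate touched by the
subfamily, the subfamily uses up all the (at most 2) allowed incidences. -/
lemma saturation (A D : Finset ι) (c : ι → X → ZMod 2) (hDA : D ⊆ A)
    (hsum : ∑ i ∈ D, c i = 0)
    (hcov : ∀ x : X, (A.filter (fun i => c i x ≠ 0)).card ≤ 2)
    {x : X} {i₀ : ι} (hi₀ : i₀ ∈ D) (hx : c i₀ x ≠ 0) :
    ∀ j ∈ A, c j x ≠ 0 → j ∈ D := by
  intro j hj hjx
  set Dx := D.filter (fun i => c i x ≠ 0) with hDxdef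
  set Cx := A.filter (fun i => c i x ≠ 0) with hCxdef
  have hsub : Dx ⊆ Cx := Finset.filter_subset_filter _ hDA
  have hcast : ((Dx.card : ZMod 2)) = 0 := by
    rw [← sum_apply_eq_card D c x, hsum]
    rfl
  have heven : 2 ∣ Dx.card := (CharP.cast_eq_zero_iff (ZMod 2) 2 Dx.card).1 hcast
  have h1 : 0 < Dx.card := Finset.card_pos.2 ⟨i₀, Finset.mem_filter.2 ⟨hi₀, hx⟩⟩
  have h2 : 2 ≤ Dx.card := by omega
  have hCx2 : Cx.card ≤ 2 := hcov x
  have heq : Dx = Cx := Finset.eq_of_subset_of_card_le hsub (by omega)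
  have hjCx : j ∈ Cx := Finset.mem_filter.2 ⟨hj, hjx⟩
  rw [← heq] at hjCx
  exact (Finset.mem_filter.1 hjCx).1

end Graph

/-! ### Linear independence over `𝔽₂` via subset sums -/

section Indep

variable {ι : Type*} [DecidableEq ι] {M : Type*} [AddCommGroup M] [Module (ZMod 2) M]

lemma f2_linearIndependent (s : Finset ι) (c : ι → M)
    (h : ∀ t ⊆ s, t.Nonempty → ∑ i ∈ t, c i ≠ 0) :
    LinearIndependent (ZMod 2) (fun i : ↥s => c i) := by
  classical
  by_contra hdep
  obtain ⟨g, hg0, i, hi⟩ := Fintype.not_linearIndependent_iff.1 hdep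
  set t : Finset ι := (s.attach.filter (fun i => g i ≠ 0)).image Subtype.val with ht
  have hts : t ⊆ s := by
    intro a ha
    rw [ht] at ha
    obtain ⟨b, _, rfl⟩ := Finset.mem_image.1 ha
    exact b.2
  have htne : t.Nonempty := by
    refine ⟨i.1, ?_⟩
    rw [ht]
    exact Finset.mem_image.2 ⟨i, Finset.mem_filter.2 ⟨Finset.mem_attach _ _, hi⟩, rfl⟩
  apply h t hts htne
  have hinj : ∀ a ∈ s.attach.filter (fun i => g i ≠ 0),
      ∀ b ∈ s.attach.filter (fun i => g i ≠ 0), a.1 = b.1 → a = b := by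
    intro a _ b _ hab; exact Subtype.ext hab
  rw [ht, Finset.sum_image hinj]
  have hterm : ∀ j ∈ s.attach.filter (fun i => g i ≠ 0), c j.1 = g j • c j.1 := by
    intro j hj
    have := zmod2_ne_zero (Finset.mem_filter.1 hj).2
    rw [this, one_smul]
  rw [Finset.sum_congr rfl hterm]
  rw [Finset.sum_filter_of_ne (by
    intro j _ hgj h0
    exact hgj (by rw [h0, zero_smul]))]
  rw [← Finset.univ_eq_attach]
  exact hg0

lemma f2_dependent_subset (s : Finset ι) (c : ι → M)
    (h : ¬ LinearIndependent (ZMod 2) (fun i : ↥s => c i)) :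
    ∃ t, t ⊆ s ∧ t.Nonempty ∧ ∑ i ∈ t, c i = 0 := by
  by_contra hno
  push_neg at hno
  exact h (f2_linearIndependent s c (fun t hts htne => hno t hts htne))

end Indep

/-! ### Functions vanishing on a set -/

section ZeroOn

variable {X : Type*} [Fintype X] [DecidableEq X]

def zeroOn (Y : Set X) : Submodule (ZMod 2) (X → ZMod 2) where
  carrier := {g | ∀ x ∈ Y, g x = 0}
  add_mem' := by
    intro a b ha hb x hx
    simp only [Pi.add_apply, ha x hx, hb x hx, add_zero]
  zero_mem' := by intro x _; rfl
  smul_mem' := by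
    intro r a ha x hx
    simp only [Pi.smul_apply, ha x hx, smul_zero]

lemma mem_zeroOn {Y : Set X} {g : X → ZMod 2} : g ∈ zeroOn Y ↔ ∀ x ∈ Y, g x = 0 :=
  Iff.rfl

lemma zeroOn_inf_eq_bot (Y : Set X) : zeroOn Y ⊓ zeroOn Yᶜ = ⊥ := by
  apply (Submodule.eq_bot_iff _).2
  intro g hg
  obtain ⟨h1, h2⟩ := Submodule.mem_inf.1 hg
  funext x
  by_cases hx : x ∈ Y
  · exact h1 x hx
  · exact h2 x hx

end ZeroOn

/-! ### The rank decomposition step -/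

section RankStep

variable {X ι : Type*} [Fintype X] [DecidableEq X] [DecidableEq ι]

lemma range_restrict_eq_image (E : Finset ι) (c : ι → X → ZMod 2) :
    Set.range (fun i : ↥E => c i) = c '' ↑E := by
  ext y
  constructor
  · rintro ⟨i, rfl⟩; exact ⟨i.1, i.2, rfl⟩
  · rintro ⟨a, ha, rfl⟩; exact ⟨⟨a, ha⟩, rfl⟩

lemma rank_step (A D : Finset ι) (c : ι → X → ZMod 2) (hDA : D ⊆ A) (hD : D.Nonempty)
    (hsum : ∑ i ∈ D, c i = 0)
    (hmin : ∀ D' ⊆ A, D'.Nonempty → ∑ i ∈ D', c i = 0 → D.card ≤ D'.card)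
    (hcov : ∀ x : X, (A.filter (fun i => c i x ≠ 0)).card ≤ 2) :
    finrank (ZMod 2) (span (ZMod 2) (c '' ↑(A \ D))) + (D.card - 1)
      ≤ finrank (ZMod 2) (span (ZMod 2) (c '' ↑A)) := by
  classical
  set Y : Set X := {x | ∃ i ∈ D, c i x ≠ 0} with hY
  set R1 := span (ZMod 2) (c '' ↑(A \ D)) with hR1
  set R2 := span (ZMod 2) (c '' ↑D) with hR2
  have hR1le : R1 ≤ zeroOn Y := by
    rw [hR1, Submodule.span_le]
    rintro _ ⟨j, hj, rfl⟩
    rw [Finset.coe_sdiff] at hj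
    obtain ⟨hjA, hjD⟩ := hj
    intro x hx
    obtain ⟨i, hiD, hix⟩ := hx
    by_contra hne
    exact hjD (saturation A D c hDA hsum hcov hiD hix j hjA hne)
  have hR2le : R2 ≤ zeroOn Yᶜ := by
    rw [hR2, Submodule.span_le]
    rintro _ ⟨i, hi, rfl⟩
    intro x hx
    by_contra hne
    exact hx ⟨i, hi, hne⟩
  have hinf : R1 ⊓ R2 = ⊥ := by
    apply le_antisymm
    · calc R1 ⊓ R2 ≤ zeroOn Y ⊓ zeroOn Yᶜ := inf_le_inf hR1le hR2le
        _ = ⊥ := zeroOn_inf_eq_bot Y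
    · exact bot_le
  have hsup : span (ZMod 2) (c '' ↑A) = R1 ⊔ R2 := by
    rw [hR1, hR2, ← Submodule.span_union, ← Set.image_union, ← Finset.coe_union,
      Finset.sdiff_union_of_subset hDA]
  have hrank2 : D.card - 1 ≤ finrank (ZMod 2) R2 := by
    obtain ⟨i₀, hi₀⟩ := hD
    set E := D.erase i₀ with hE
    have hED : E ⊆ D := Finset.erase_subset _ _
    have hind : LinearIndependent (ZMod 2) (fun i : ↥E => c i) := by
      apply f2_linearIndependent
      intro t hts htne hzero
      have htA : t ⊆ A := subset_trans (subset_trans hts hED) hDA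
      have hge := hmin t htA htne hzero
      have hcard : t.card ≤ E.card := Finset.card_le_card hts
      rw [hE, Finset.card_erase_of_mem hi₀] at hcard
      have hDpos : 0 < D.card := Finset.card_pos.2 ⟨i₀, hi₀⟩
      omega
    have hrk := finrank_span_eq_card hind
    rw [range_restrict_eq_image] at hrk
    have hle : span (ZMod 2) (c '' ↑E) ≤ R2 := by
      rw [hR2]
      exact Submodule.span_mono (Set.image_mono (by exact_mod_cast hED))
    have hmono := Submodule.finrank_mono hle
    rw [hrk, Fintype.card_coe, hE, Finset.card_erase_of_mem hi₀] at hmono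
    exact hmono
  have hfr := Submodule.finrank_sup_add_finrank_inf_eq R1 R2
  rw [hinf, finrank_bot, add_zero] at hfr
  rw [hsup, hfr]
  omega

end RankStep

/-! ### The two counting lemmas -/

section MainGraph

variable {X ι : Type*} [Fintype X] [DecidableEq X] [DecidableEq ι]

lemma card_le_two_mul_rank :
    ∀ (n : ℕ) (A : Finset ι) (c : ι → X → ZMod 2), A.card ≤ n →
    (∀ i ∈ A, c i ≠ 0) →
    (∀ x : X, (A.filter (fun i => c i x ≠ 0)).card ≤ 2) →
    A.card ≤ 2 * finrank (ZMod 2) (span (ZMod 2) (c '' ↑A)) := by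
  intro n
  induction n with
  | zero =>
    intro A c hA _ _
    omega
  | succ n IH =>
    intro A c hA h0 hcov
    by_cases hind : LinearIndependent (ZMod 2) (fun i : ↥A => c i)
    · have hrk := finrank_span_eq_card hind
      rw [range_restrict_eq_image, Fintype.card_coe] at hrk
      omega
    · obtain ⟨t, hts, htne, htsum⟩ := f2_dependent_subset A c hind
      set 𝒮 := A.powerset.filter (fun D => D.Nonempty ∧ ∑ i ∈ D, c i = 0) with h𝒮
      have ht𝒮 : t ∈ 𝒮 := Finset.mem_filter.2 ⟨Finset.mem_powerset.2 hts, htne, htsum⟩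
      obtain ⟨D, hD𝒮, hDmin⟩ := Finset.exists_min_image 𝒮 Finset.card ⟨t, ht𝒮⟩
      obtain ⟨hDpow, hDne, hDsum⟩ := Finset.mem_filter.1 hD𝒮
      have hDA : D ⊆ A := Finset.mem_powerset.1 hDpow
      have hmin : ∀ D' ⊆ A, D'.Nonempty → ∑ i ∈ D', c i = 0 → D.card ≤ D'.card := by
        intro D' h1 h2 h3
        exact hDmin D' (Finset.mem_filter.2 ⟨Finset.mem_powerset.2 h1, h2, h3⟩)
      have h2card : 2 ≤ D.card := by
        by_contra hlt
        push_neg at hlt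
        have hpos : 0 < D.card := Finset.card_pos.2 hDne
        have h1 : D.card = 1 := by omega
        obtain ⟨i, rfl⟩ := Finset.card_eq_one.1 h1
        rw [Finset.sum_singleton] at hDsum
        exact h0 i (hDA (Finset.mem_singleton_self i)) hDsum
      have hstep := rank_step A D c hDA hDne hDsum hmin hcov
      have hDcardA := Finset.card_le_card hDA
      have hADcard : (A \ D).card + D.card = A.card := by
        rw [Finset.card_sdiff_of_subset hDA]
        omega
      have hIH := IH (A \ D) c (by omega) (fun i hi => h0 i (Finset.mem_sdiff.1 hi).1)
        (fun x => le_trans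
          (Finset.card_le_card (Finset.filter_subset_filter _ Finset.sdiff_subset)) (hcov x))
      omega

lemma two_mul_card_le_three_mul_rank :
    ∀ (n : ℕ) (A : Finset ι) (c : ι → X → ZMod 2), A.card ≤ n →
    Set.InjOn c ↑A →
    (∀ i ∈ A, c i ≠ 0) →
    (∀ x : X, (A.filter (fun i => c i x ≠ 0)).card ≤ 2) →
    2 * A.card ≤ 3 * finrank (ZMod 2) (span (ZMod 2) (c '' ↑A)) := by
  intro n
  induction n with
  | zero =>
    intro A c hA _ _ _
    omega
  | succ n IH =>
    intro A c hA hinj h0 hcov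
    by_cases hind : LinearIndependent (ZMod 2) (fun i : ↥A => c i)
    · have hrk := finrank_span_eq_card hind
      rw [range_restrict_eq_image, Fintype.card_coe] at hrk
      omega
    · obtain ⟨t, hts, htne, htsum⟩ := f2_dependent_subset A c hind
      set 𝒮 := A.powerset.filter (fun D => D.Nonempty ∧ ∑ i ∈ D, c i = 0) with h𝒮
      have ht𝒮 : t ∈ 𝒮 := Finset.mem_filter.2 ⟨Finset.mem_powerset.2 hts, htne, htsum⟩
      obtain ⟨D, hD𝒮, hDmin⟩ := Finset.exists_min_image 𝒮 Finset.card ⟨t, ht𝒮⟩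
      obtain ⟨hDpow, hDne, hDsum⟩ := Finset.mem_filter.1 hD𝒮
      have hDA : D ⊆ A := Finset.mem_powerset.1 hDpow
      have hmin : ∀ D' ⊆ A, D'.Nonempty → ∑ i ∈ D', c i = 0 → D.card ≤ D'.card := by
        intro D' h1 h2 h3
        exact hDmin D' (Finset.mem_filter.2 ⟨Finset.mem_powerset.2 h1, h2, h3⟩)
      have h2card : 2 ≤ D.card := by
        by_contra hlt
        push_neg at hlt
        have hpos : 0 < D.card := Finset.card_pos.2 hDne
        have h1 : D.card = 1 := by omega
        obtain ⟨i, rfl⟩ := Finset.card_eq_one.1 h1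
        rw [Finset.sum_singleton] at hDsum
        exact h0 i (hDA (Finset.mem_singleton_self i)) hDsum
      have h3card : 3 ≤ D.card := by
        by_contra hlt
        push_neg at hlt
        have h2 : D.card = 2 := by omega
        obtain ⟨a, b, hab, rfl⟩ := Finset.card_eq_two.1 h2
        rw [Finset.sum_pair hab] at hDsum
        have hceq : c a = c b := by
          funext x
          exact zmod2_add_eq_zero (by
            have := congrFun hDsum x
            simpa using this)
        have haA : a ∈ A := hDA (by simp)
        have hbA : b ∈ A := hDA (by simp)
        exact hab (hinj haA hbA hceq)
      have hstep := rank_step A D c hDA hDne hDsum hmin hcov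
      have hDcardA := Finset.card_le_card hDA
      have hADcard : (A \ D).card + D.card = A.card := by
        rw [Finset.card_sdiff_of_subset hDA]
        omega
      have hIH := IH (A \ D) c (by omega)
        (hinj.mono (by exact_mod_cast Finset.sdiff_subset))
        (fun i hi => h0 i (Finset.mem_sdiff.1 hi).1)
        (fun x => le_trans
          (Finset.card_le_card (Finset.filter_subset_filter _ Finset.sdiff_subset)) (hcov x))
      omega

end MainGraph


/-! ### Instance-flexible counting helpers -/

lemma card_filter_iff {γ : Type*} (s : Finset γ) (p q : γ → Prop)
    [DecidablePred p] [DecidablePred q] (h : ∀ x ∈ s, p x ↔ q x) :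
    (s.filter p).card = (s.filter q).card := by
  congr 1
  exact Finset.filter_congr h

lemma card_filter_equiv {α : Type*} {s : Finset α} {n : ℕ} (e : Fin n ≃ ↥s) (P : α → Prop)
    [DecidablePred P] :
    ((Finset.univ : Finset (Fin n)).filter (fun j => P ((e j : ↥s) : α))).card
      = (s.filter P).card := by
  refine Finset.card_bij' (fun j _ => ((e j : ↥s) : α))
    (fun a ha => e.symm ⟨a, (Finset.mem_filter.1 ha).1⟩) ?_ ?_ ?_ ?_
  · intro j hj
    exact Finset.mem_filter.2 ⟨(e j).2, (Finset.mem_filter.1 hj).2⟩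
  · intro a ha
    refine Finset.mem_filter.2 ⟨Finset.mem_univ _, ?_⟩
    rw [Equiv.apply_symm_apply]
    exact (Finset.mem_filter.1 ha).2
  · intro j hj
    simp
  · intro a ha
    simp

/-! ### Linear algebra preliminaries over `𝔽₂` -/

section LinAlg

variable {U : Type*} [AddCommGroup U] [Module (ZMod 2) U] [FiniteDimensional (ZMod 2) U]

/-- A finset injecting into the nonzero vectors of a submodule `W` has size
`< 2 ^ finrank W`. -/
lemma card_lt_pow_finrank {ι : Type*} (s : Finset ι) (u : ι → U)
    (W : Submodule (ZMod 2) U)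
    (hinj : Set.InjOn u ↑s) (hmem : ∀ i ∈ s, u i ∈ W) (hne : ∀ i ∈ s, u i ≠ 0) :
    s.card < 2 ^ finrank (ZMod 2) W := by
  classical
  have b := Module.finBasis (ZMod 2) W
  haveI : Fintype ↥W := Fintype.ofEquiv _ b.equivFun.toEquiv.symm
  have hcardW : Fintype.card ↥W = 2 ^ finrank (ZMod 2) W := by
    rw [Fintype.card_congr b.equivFun.toEquiv, Fintype.card_fun, ZMod.card,
      Fintype.card_fin]
  have h1 : Set.InjOn (fun i : {x // x ∈ s} => (⟨u i.1, hmem i.1 i.2⟩ : ↥W))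
      ↑s.attach := by
    intro a _ b' _ hab
    apply Subtype.ext
    exact hinj (Finset.mem_coe.2 a.2) (Finset.mem_coe.2 b'.2)
      (by simpa using congrArg Subtype.val hab)
  have hcardt : (s.attach.image (fun i : {x // x ∈ s} =>
      (⟨u i.1, hmem i.1 i.2⟩ : ↥W))).card = s.card := by
    rw [Finset.card_image_of_injOn h1, Finset.card_attach]
  have hsub : (s.attach.image (fun i : {x // x ∈ s} =>
      (⟨u i.1, hmem i.1 i.2⟩ : ↥W))) ⊆ Finset.univ.erase 0 := by
    intro x hx
    obtain ⟨i, _, rfl⟩ := Finset.mem_image.1 hx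
    refine Finset.mem_erase.2 ⟨?_, Finset.mem_univ _⟩
    intro h0
    exact hne i.1 i.2 (by simpa using congrArg Subtype.val h0)
  have hle := Finset.card_le_card hsub
  have herase : (Finset.univ.erase (0 : ↥W)).card = Fintype.card ↥W - 1 := by
    rw [Finset.card_erase_of_mem (Finset.mem_univ _), Finset.card_univ]
  have hpos : 0 < Fintype.card ↥W := Fintype.card_pos
  omega

/-- The evaluation map on the dual, at a finite family of vectors. -/
noncomputable def evm (v : Fin 10 → U) :
    Module.Dual (ZMod 2) U →ₗ[ZMod 2] (Fin 10 → ZMod 2) where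
  toFun f := fun i => f (v i)
  map_add' f g := by funext i; simp
  map_smul' a f := by funext i; simp

@[simp] lemma evm_apply (v : Fin 10 → U) (f : Module.Dual (ZMod 2) U) (i : Fin 10) :
    evm v f i = f (v i) := rfl

lemma ker_evm (v : Fin 10 → U) :
    LinearMap.ker (evm v) = (span (ZMod 2) (Set.range v)).dualAnnihilator := by
  ext f
  constructor
  · intro hf
    rw [Submodule.mem_dualAnnihilator]
    intro w hw
    have hle : span (ZMod 2) (Set.range v) ≤ LinearMap.ker f := by
      rw [Submodule.span_le]
      rintro _ ⟨i, rfl⟩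
      have h0 : evm v f = 0 := hf
      exact congrFun h0 i
    exact hle hw
  · intro hf
    show evm v f = 0
    funext i
    exact ((Submodule.mem_dualAnnihilator f).1 hf) (v i) (Submodule.subset_span ⟨i, rfl⟩)

lemma finrank_ker_evm (hU : finrank (ZMod 2) U = 6) (v : Fin 10 → U) :
    finrank (ZMod 2) (LinearMap.ker (evm v))
      + finrank (ZMod 2) (span (ZMod 2) (Set.range v)) = 6 := by
  rw [ker_evm]
  have e : finrank (ZMod 2) (U ⧸ span (ZMod 2) (Set.range v))
      = finrank (ZMod 2) ((span (ZMod 2) (Set.range v)).dualAnnihilator) :=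
    (Subspace.quotEquivAnnihilator (span (ZMod 2) (Set.range v))).finrank_eq
  have hq := Submodule.finrank_quotient_add_finrank (span (ZMod 2) (Set.range v))
  omega

lemma finrank_range_evm (hU : finrank (ZMod 2) U = 6) (v : Fin 10 → U) :
    finrank (ZMod 2) (LinearMap.range (evm v))
      + finrank (ZMod 2) (LinearMap.ker (evm v)) = 6 := by
  rw [LinearMap.finrank_range_add_finrank_ker (evm v)]
  rw [Subspace.dual_finrank_eq]
  exact hU

end LinAlg

/-! ### The core dimension lemma : the span of the points is 5-dimensional -/

section Aux

variable {U : Type*} [AddCommGroup U] [Module (ZMod 2) U] [FiniteDimensional (ZMod 2) U]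

lemma aux_dim_five (hU : finrank (ZMod 2) U = 6)
    (v : Fin 10 → U) (φ : Fin 10 → Module.Dual (ZMod 2) U)
    (hvinj : Function.Injective v) (hφinj : Function.Injective φ)
    (hv0 : ∀ i, v i ≠ 0) (hφ0 : ∀ j, φ j ≠ 0)
    (hrow : ∀ i, (Finset.univ.filter (fun j => φ j (v i) ≠ 0)).card ≤ 2)
    (hcol : ∀ j, (Finset.univ.filter (fun i => φ j (v i) ≠ 0)).card ≤ 2) :
    finrank (ZMod 2) (span (ZMod 2) (Set.range v)) = 5 := by
  classical
  have hd6 : finrank (ZMod 2) (span (ZMod 2) (Set.range v)) ≤ 6 := by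
    rw [← hU]
    exact Submodule.finrank_le _
  have h10 : 10 < 2 ^ finrank (ZMod 2) (span (ZMod 2) (Set.range v)) := by
    have h := card_lt_pow_finrank Finset.univ v (span (ZMod 2) (Set.range v))
      (Set.injOn_of_injective hvinj)
      (fun i _ => Submodule.subset_span ⟨i, rfl⟩)
      (fun i _ => hv0 i)
    simpa using h
  have hd4 : 4 ≤ finrank (ZMod 2) (span (ZMod 2) (Set.range v)) := by
    by_contra hlt
    push_neg at hlt
    have h8 : (2:ℕ) ^ finrank (ZMod 2) (span (ZMod 2) (Set.range v)) ≤ 8 := by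
      calc (2:ℕ) ^ finrank (ZMod 2) (span (ZMod 2) (Set.range v)) ≤ 2 ^ 3 :=
            Nat.pow_le_pow_right (by norm_num) (by omega)
        _ = 8 := by norm_num
    omega
  have hker : finrank (ZMod 2) (LinearMap.ker (evm v))
      + finrank (ZMod 2) (span (ZMod 2) (Set.range v)) = 6 := finrank_ker_evm hU v
  have hnot4 : finrank (ZMod 2) (span (ZMod 2) (Set.range v)) ≠ 4 := by
    intro h4
    by_cases hall : ∀ j i, φ j (v i) = 0
    · have hmem : ∀ j, φ j ∈ LinearMap.ker (evm v) := by
        intro j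
        show evm v (φ j) = 0
        funext i
        exact hall j i
      have hb := card_lt_pow_finrank Finset.univ φ (LinearMap.ker (evm v))
        (Set.injOn_of_injective hφinj) (fun j _ => hmem j) (fun j _ => hφ0 j)
      have hker2 : finrank (ZMod 2) (LinearMap.ker (evm v)) = 2 := by omega
      rw [hker2] at hb
      norm_num [Finset.card_univ] at hb
    · push_neg at hall
      obtain ⟨j, i₀, hne0⟩ := hall
      have hlt : (span (ZMod 2) (Set.range v)) ⊓ LinearMap.ker (φ j)
          < span (ZMod 2) (Set.range v) := by
        apply lt_of_le_of_ne inf_le_left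
        intro heq
        have hmem : v i₀ ∈ (span (ZMod 2) (Set.range v)) ⊓ LinearMap.ker (φ j) := by
          rw [heq]
          exact Submodule.subset_span ⟨i₀, rfl⟩
        exact hne0 (LinearMap.mem_ker.1 (Submodule.mem_inf.1 hmem).2)
      have hW1rank := Submodule.finrank_lt_finrank_of_lt hlt
      set Z := Finset.univ.filter (fun i => φ j (v i) = 0) with hZ
      have hZcard : 8 ≤ Z.card := by
        have hsplit := Finset.card_filter_add_card_filter_not
          (s := (Finset.univ : Finset (Fin 10))) (p := fun i => φ j (v i) ≠ 0)
        have hZeq : ((Finset.univ : Finset (Fin 10)).filter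
            (fun i => ¬ (φ j (v i) ≠ 0))).card = Z.card := by
          apply card_filter_iff
          intro x _
          tauto
        have hcnt := hcol j
        simp only [Finset.card_univ, Fintype.card_fin] at hsplit
        omega
      have hbound := card_lt_pow_finrank Z v
        ((span (ZMod 2) (Set.range v)) ⊓ LinearMap.ker (φ j))
        (Set.injOn_of_injective hvinj)
        (fun i hi => Submodule.mem_inf.2
          ⟨Submodule.subset_span ⟨i, rfl⟩,
           LinearMap.mem_ker.2 ((Finset.mem_filter.1 hi).2)⟩)
        (fun i _ => hv0 i)
      have hfr3 : finrank (ZMod 2)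
          ↥(span (ZMod 2) (Set.range v) ⊓ LinearMap.ker (φ j)) ≤ 3 := by omega
      have hpow : (2:ℕ) ^ finrank (ZMod 2)
          ↥(span (ZMod 2) (Set.range v) ⊓ LinearMap.ker (φ j)) ≤ 8 := by
        have hp : (2:ℕ) ^ finrank (ZMod 2)
            ↥(span (ZMod 2) (Set.range v) ⊓ LinearMap.ker (φ j)) ≤ 2 ^ 3 :=
          Nat.pow_le_pow_right (by norm_num) hfr3
        norm_num at hp
        exact hp
      omega
  have hnot6 : finrank (ZMod 2) (span (ZMod 2) (Set.range v)) ≠ 6 := by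
    intro h6
    have hker0 : finrank (ZMod 2) (LinearMap.ker (evm v)) = 0 := by omega
    have hkerbot : LinearMap.ker (evm v) = ⊥ := Submodule.finrank_eq_zero.1 hker0
    have hevinj : Function.Injective (evm v) := LinearMap.ker_eq_bot.1 hkerbot
    have hcinj : Set.InjOn (fun j => evm v (φ j))
        ↑(Finset.univ : Finset (Fin 10)) := by
      intro j1 _ j2 _ heq
      exact hφinj (hevinj heq)
    have hc0 : ∀ j ∈ (Finset.univ : Finset (Fin 10)), evm v (φ j) ≠ 0 := by
      intro j _ h0
      exact hφ0 j (hevinj (by rw [map_zero]; exact h0))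
    have hG1 := two_mul_card_le_three_mul_rank 10 Finset.univ (fun j => evm v (φ j))
      (by simp) hcinj hc0 (fun x => hrow x)
    have hle : span (ZMod 2) ((fun j => evm v (φ j)) '' ↑(Finset.univ : Finset (Fin 10)))
        ≤ LinearMap.range (evm v) := by
      rw [Submodule.span_le]
      rintro _ ⟨j, _, rfl⟩
      exact ⟨φ j, rfl⟩
    have hmono := Submodule.finrank_mono hle
    have hrange : finrank (ZMod 2) (LinearMap.range (evm v)) = 6 := by
      have h := finrank_range_evm hU v
      omega
    simp only [Finset.card_univ, Fintype.card_fin] at hG1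
    omega
  omega

end Aux

/-! ### The core contradiction -/

section Core

variable {U : Type*} [AddCommGroup U] [Module (ZMod 2) U] [FiniteDimensional (ZMod 2) U]

lemma map_rank_drop {M N : Type*} [AddCommGroup M] [Module (ZMod 2) M]
    [AddCommGroup N] [Module (ZMod 2) N] [FiniteDimensional (ZMod 2) M]
    (ℓ : M →ₗ[ZMod 2] N) (F : Submodule (ZMod 2) M)
    (lam : M) (hlam0 : lam ≠ 0) (hlF : lam ∈ F) (hlamker : ℓ lam = 0) :
    finrank (ZMod 2) (Submodule.map ℓ F) + 1 ≤ finrank (ZMod 2) F := by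
  classical
  have hrn : finrank (ZMod 2) (LinearMap.range (ℓ.domRestrict F))
      + finrank (ZMod 2) (LinearMap.ker (ℓ.domRestrict F))
      = finrank (ZMod 2) F :=
    LinearMap.finrank_range_add_finrank_ker _
  rw [LinearMap.range_domRestrict] at hrn
  have hxk : (⟨lam, hlF⟩ : ↥F) ∈ LinearMap.ker (ℓ.domRestrict F) := by
    rw [LinearMap.mem_ker, LinearMap.domRestrict_apply]
    exact hlamker
  have hkpos : 0 < finrank (ZMod 2) (LinearMap.ker (ℓ.domRestrict F)) := by
    haveI : Nontrivial ↥(LinearMap.ker (ℓ.domRestrict F)) := by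
      refine nontrivial_of_ne ⟨⟨lam, hlF⟩, hxk⟩ 0 ?_
      intro h0
      apply hlam0
      have h1 := congrArg (fun z : ↥(LinearMap.ker (ℓ.domRestrict F)) =>
        ((z : ↥F) : M)) h0
      simpa using h1
    exact Module.finrank_pos
  omega

lemma core (hU : finrank (ZMod 2) U = 6)
    (v : Fin 10 → U) (φ : Fin 10 → Module.Dual (ZMod 2) U)
    (hvinj : Function.Injective v) (hφinj : Function.Injective φ)
    (hv0 : ∀ i, v i ≠ 0) (hφ0 : ∀ j, φ j ≠ 0)
    (hrow : ∀ i, (Finset.univ.filter (fun j => φ j (v i) ≠ 0)).card ≤ 2)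
    (hcol : ∀ j, (Finset.univ.filter (fun i => φ j (v i) ≠ 0)).card ≤ 2) :
    False := by
  classical
  have hd5 := aux_dim_five hU v φ hvinj hφinj hv0 hφ0 hrow hcol
  have hevalinj : Function.Injective (Module.Dual.eval (ZMod 2) U) := by
    rw [← Module.evalEquiv_toLinearMap]
    exact (Module.evalEquiv (ZMod 2) U).injective
  have he5 : finrank (ZMod 2) (span (ZMod 2) (Set.range φ)) = 5 := by
    exact aux_dim_five (U := Module.Dual (ZMod 2) U)
      (by rw [Subspace.dual_finrank_eq]; exact hU)
      φ (fun i => Module.Dual.eval (ZMod 2) U (v i))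
      hφinj
      (fun i1 i2 h => hvinj (hevalinj h))
      hφ0
      (fun i h0 => hv0 i (hevalinj (by rw [map_zero]; exact h0)))
      (fun i => by
        have h := hcol i
        simp only [Module.Dual.eval_apply]
        exact (card_filter_iff _ _ _ (fun _ _ => Iff.rfl)).trans_le h)
      (fun j => by
        have h := hrow j
        simp only [Module.Dual.eval_apply]
        exact (card_filter_iff _ _ _ (fun _ _ => Iff.rfl)).trans_le h)
  have hk1 : finrank (ZMod 2) (LinearMap.ker (evm v)) = 1 := by
    have h := finrank_ker_evm hU v
    omega
  obtain ⟨lam, hlam0, hkerlam⟩ :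
      ∃ lam : Module.Dual (ZMod 2) U, lam ≠ 0 ∧
        LinearMap.ker (evm v) = span (ZMod 2) {lam} := by
    have hpos : 0 < finrank (ZMod 2) (LinearMap.ker (evm v)) := by omega
    obtain ⟨x, hx⟩ := Module.finrank_pos_iff_exists_ne_zero.1 hpos
    have hxne : (x : Module.Dual (ZMod 2) U) ≠ 0 := by
      intro h0
      exact hx (Subtype.ext h0)
    refine ⟨(x : Module.Dual (ZMod 2) U), hxne, ?_⟩
    have hle : span (ZMod 2) {(x : Module.Dual (ZMod 2) U)} ≤ LinearMap.ker (evm v) := by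
      rw [Submodule.span_singleton_le_iff_mem]
      exact x.2
    refine (Submodule.eq_of_le_of_finrank_le hle ?_).symm
    rw [finrank_span_singleton hxne, hk1]
  have hmemker : ∀ f : Module.Dual (ZMod 2) U,
      f ∈ LinearMap.ker (evm v) → f = 0 ∨ f = lam := by
    intro f hf
    rw [hkerlam] at hf
    obtain ⟨a, rfl⟩ := Submodule.mem_span_singleton.1 hf
    rcases zmod2_cases a with h0 | h1
    · left; rw [h0, zero_smul]
    · right; rw [h1, one_smul]
  have hlamker : lam ∈ LinearMap.ker (evm v) := by
    rw [hkerlam]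
    exact Submodule.mem_span_singleton_self lam
  have hφF : ∀ j, φ j ∈ span (ZMod 2) (Set.range φ) :=
    fun j => Submodule.subset_span ⟨j, rfl⟩
  have hrange5 : finrank (ZMod 2) (LinearMap.range (evm v)) = 5 := by
    have h := finrank_range_evm hU v
    omega
  have hcov : ∀ x : Fin 10,
      ((Finset.univ : Finset (Fin 10)).filter (fun j => evm v (φ j) x ≠ 0)).card ≤ 2 :=
    fun x => hrow x
  by_cases hlF : lam ∈ span (ZMod 2) (Set.range φ)
  · -- λ belongs to the span of the functionals
    set A := (Finset.univ : Finset (Fin 10)).filter (fun j => evm v (φ j) ≠ 0) with hA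
    have hAcard : 9 ≤ A.card := by
      have hsplit := Finset.card_filter_add_card_filter_not
        (s := (Finset.univ : Finset (Fin 10))) (p := fun j => evm v (φ j) ≠ 0)
      rw [← hA] at hsplit
      have hone : ((Finset.univ : Finset (Fin 10)).filter
          (fun j => ¬ (evm v (φ j) ≠ 0))).card ≤ 1 := by
        apply Finset.card_le_one.2
        intro j1 hj1 j2 hj2
        have h1 : evm v (φ j1) = 0 := not_not.1 (Finset.mem_filter.1 hj1).2
        have h2 : evm v (φ j2) = 0 := not_not.1 (Finset.mem_filter.1 hj2).2
        have e1 : φ j1 = lam := (hmemker _ h1).resolve_left (hφ0 j1)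
        have e2 : φ j2 = lam := (hmemker _ h2).resolve_left (hφ0 j2)
        exact hφinj (e1.trans e2.symm)
      simp only [Finset.card_univ, Fintype.card_fin] at hsplit
      omega
    have hA10 : A.card ≤ 10 := by
      rw [hA]
      have h := Finset.card_filter_le (Finset.univ : Finset (Fin 10))
        (fun j => evm v (φ j) ≠ 0)
      simpa using h
    have hG2 := card_le_two_mul_rank 10 A (fun j => evm v (φ j)) hA10
      (fun j hj => by
        have := Finset.mem_filter.1 (hA ▸ hj)
        exact this.2)
      (fun x => le_trans
        (Finset.card_le_card (Finset.filter_subset_filter _ (Finset.filter_subset _ _)))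
        (hcov x))
    have hspan_le : span (ZMod 2) ((fun j => evm v (φ j)) '' ↑A)
        ≤ Submodule.map (evm v) (span (ZMod 2) (Set.range φ)) := by
      rw [Submodule.span_le]
      rintro _ ⟨j, _, rfl⟩
      exact Submodule.mem_map.2 ⟨φ j, hφF j, rfl⟩
    have hmapF : finrank (ZMod 2)
        (Submodule.map (evm v) (span (ZMod 2) (Set.range φ))) ≤ 4 := by
      have hdrop := map_rank_drop (evm v) (span (ZMod 2) (Set.range φ)) lam hlam0 hlF
        (LinearMap.mem_ker.1 hlamker)
      omega
    have hmono := Submodule.finrank_mono hspan_le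
    omega
  · -- λ not in the span of the functionals
    have hcinj : Set.InjOn (fun j => evm v (φ j))
        ↑(Finset.univ : Finset (Fin 10)) := by
      intro j1 _ j2 _ heq
      have hsub : φ j1 - φ j2 ∈ LinearMap.ker (evm v) := by
        show evm v (φ j1 - φ j2) = 0
        rw [map_sub]
        have h12 : evm v (φ j1) = evm v (φ j2) := heq
        rw [h12, sub_self]
      rcases hmemker _ hsub with h0 | hl
      · exact hφinj (sub_eq_zero.1 h0)
      · exfalso
        apply hlF
        rw [← hl]
        exact Submodule.sub_mem _ (hφF j1) (hφF j2)
    have hc0 : ∀ j ∈ (Finset.univ : Finset (Fin 10)), evm v (φ j) ≠ 0 := by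
      intro j _ h0
      have hm : φ j ∈ LinearMap.ker (evm v) := h0
      rcases hmemker _ hm with h | h
      · exact hφ0 j h
      · exact hlF (h ▸ hφF j)
    have hG1 := two_mul_card_le_three_mul_rank 10 Finset.univ (fun j => evm v (φ j))
      (by simp) hcinj hc0 hcov
    have hle : span (ZMod 2) ((fun j => evm v (φ j)) '' ↑(Finset.univ : Finset (Fin 10)))
        ≤ LinearMap.range (evm v) := by
      rw [Submodule.span_le]
      rintro _ ⟨j, _, rfl⟩
      exact ⟨φ j, rfl⟩
    have hmono := Submodule.finrank_mono hle
    simp only [Finset.card_univ, Fintype.card_fin] at hG1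
    omega

end Core

/-! ### Extraction of generators and functionals -/

section Extract

variable {U : Type*} [AddCommGroup U] [Module (ZMod 2) U] [FiniteDimensional (ZMod 2) U]

lemma exists_generator {p : Submodule (ZMod 2) U} (h : finrank (ZMod 2) p = 1) :
    ∃ w : U, w ≠ 0 ∧ p = span (ZMod 2) {w} := by
  have hpos : 0 < finrank (ZMod 2) p := by omega
  obtain ⟨x, hx⟩ := Module.finrank_pos_iff_exists_ne_zero.1 hpos
  have hxne : (x : U) ≠ 0 := by
    intro h0
    exact hx (Subtype.ext h0)
  refine ⟨(x : U), hxne, ?_⟩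
  have hle : span (ZMod 2) {(x : U)} ≤ p := by
    rw [Submodule.span_singleton_le_iff_mem]
    exact x.2
  refine (Submodule.eq_of_le_of_finrank_le hle ?_).symm
  rw [finrank_span_singleton hxne, h]

lemma exists_functional (hU : finrank (ZMod 2) U = 6)
    {H : Submodule (ZMod 2) U} (h : finrank (ZMod 2) H = 5) :
    ∃ f : Module.Dual (ZMod 2) U, f ≠ 0 ∧ H = LinearMap.ker f := by
  have hq : finrank (ZMod 2) (U ⧸ H) = 1 := by
    have hqf := Submodule.finrank_quotient_add_finrank H
    omega
  let e : (U ⧸ H) ≃ₗ[ZMod 2] ZMod 2 :=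
    LinearEquiv.ofFinrankEq _ _ (by rw [hq, finrank_self])
  refine ⟨e.toLinearMap ∘ₗ H.mkQ, ?_, ?_⟩
  · intro h0
    have hall : ∀ x : U, x ∈ H := by
      intro x
      have h1 := LinearMap.congr_fun h0 x
      simp only [LinearMap.comp_apply, LinearMap.zero_apply, LinearEquiv.coe_coe] at h1
      have hq0 : H.mkQ x = 0 := by
        apply e.injective
        rw [map_zero]
        exact h1
      rwa [← Submodule.ker_mkQ H, LinearMap.mem_ker]
    have htop : H = ⊤ := Submodule.eq_top_iff'.2 hall
    rw [htop, finrank_top] at h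
    omega
  · ext x
    constructor
    · intro hx
      show (e.toLinearMap ∘ₗ H.mkQ) x = 0
      rw [LinearMap.comp_apply]
      have hq0 : H.mkQ x = 0 := by
        rw [← LinearMap.mem_ker, Submodule.ker_mkQ]
        exact hx
      rw [hq0, map_zero]
    · intro hx
      have h1 : e (H.mkQ x) = 0 := hx
      have hq0 : H.mkQ x = 0 := by
        apply e.injective
        rw [map_zero]
        exact h1
      rw [← Submodule.ker_mkQ H, LinearMap.mem_ker]
      exact hq0

end Extract

end PG52Aux

open PG52Aux Submodule

/-- In the point-hyperplane incidence bipartite graph of PG(5, GF(2)), there is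
no induced subgraph with 10 points and 10 hyperplanes in which every point lies
on at least 8 of the 10 hyperplanes and every hyperplane contains at least 8 of
the 10 points. -/
theorem pg5_gf2_no_10_10_mindeg8_subgraph :
    ¬ ∃ (S T : Finset (Submodule (ZMod 2) (Fin 6 → ZMod 2))),
      S.card = 10 ∧ T.card = 10 ∧
      (∀ p ∈ S, finrank (ZMod 2) p = 1) ∧
      (∀ H ∈ T, finrank (ZMod 2) H = 5) ∧
      (∀ p ∈ S, 8 ≤ (T.filter (fun H => p ≤ H)).card) ∧
      (∀ H ∈ T, 8 ≤ (S.filter (fun p => p ≤ H)).card) := by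
  classical
  rintro ⟨S, T, hS, hT, hS1, hT5, hSdeg, hTdeg⟩
  have hUfin : finrank (ZMod 2) (Fin 6 → ZMod 2) = 6 := by
    simp [Module.finrank_pi]
  have hpoint : ∀ p ∈ S, ∃ w : Fin 6 → ZMod 2, w ≠ 0 ∧ p = span (ZMod 2) {w} := by
    intro p hp
    exact exists_generator (hS1 p hp)
  choose! w hw0 hwspan using hpoint
  have hhyp : ∀ H ∈ T, ∃ f : Module.Dual (ZMod 2) (Fin 6 → ZMod 2),
      f ≠ 0 ∧ H = LinearMap.ker f := by
    intro H hH
    exact exists_functional hUfin (hT5 H hH)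
  choose! f hf0 hfker using hhyp
  let eS : Fin 10 ≃ ↥S := (Finset.equivFinOfCardEq hS).symm
  let eT : Fin 10 ≃ ↥T := (Finset.equivFinOfCardEq hT).symm
  set v : Fin 10 → (Fin 6 → ZMod 2) :=
    fun i => w ((eS i : ↥S) : Submodule (ZMod 2) (Fin 6 → ZMod 2)) with hv
  set φ : Fin 10 → Module.Dual (ZMod 2) (Fin 6 → ZMod 2) :=
    fun j => f ((eT j : ↥T) : Submodule (ZMod 2) (Fin 6 → ZMod 2)) with hφ
  have hvmem : ∀ i : Fin 10,
      ((eS i : ↥S) : Submodule (ZMod 2) (Fin 6 → ZMod 2)) ∈ S := fun i => (eS i).2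
  have hφmem : ∀ j : Fin 10,
      ((eT j : ↥T) : Submodule (ZMod 2) (Fin 6 → ZMod 2)) ∈ T := fun j => (eT j).2
  have hv0 : ∀ i, v i ≠ 0 := fun i => hw0 _ (hvmem i)
  have hφ0 : ∀ j, φ j ≠ 0 := fun j => hf0 _ (hφmem j)
  have hvspan : ∀ i, ((eS i : ↥S) : Submodule (ZMod 2) (Fin 6 → ZMod 2))
      = span (ZMod 2) {v i} := fun i => hwspan _ (hvmem i)
  have hφker : ∀ j, ((eT j : ↥T) : Submodule (ZMod 2) (Fin 6 → ZMod 2))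
      = LinearMap.ker (φ j) := fun j => hfker _ (hφmem j)
  have hvinj : Function.Injective v := by
    intro i1 i2 h
    have heq : ((eS i1 : ↥S) : Submodule (ZMod 2) (Fin 6 → ZMod 2))
        = ((eS i2 : ↥S) : Submodule (ZMod 2) (Fin 6 → ZMod 2)) := by
      rw [hvspan i1, hvspan i2, h]
    exact eS.injective (Subtype.ext heq)
  have hφinj : Function.Injective φ := by
    intro j1 j2 h
    have heq : ((eT j1 : ↥T) : Submodule (ZMod 2) (Fin 6 → ZMod 2))
        = ((eT j2 : ↥T) : Submodule (ZMod 2) (Fin 6 → ZMod 2)) := by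
      rw [hφker j1, hφker j2, h]
    exact eT.injective (Subtype.ext heq)
  have hinc : ∀ (i j : Fin 10),
      (((eS i : ↥S) : Submodule (ZMod 2) (Fin 6 → ZMod 2))
        ≤ ((eT j : ↥T) : Submodule (ZMod 2) (Fin 6 → ZMod 2)))
        ↔ φ j (v i) = 0 := by
    intro i j
    rw [hvspan i, hφker j, Submodule.span_singleton_le_iff_mem, LinearMap.mem_ker]
  have hrow : ∀ i, (Finset.univ.filter (fun j => φ j (v i) ≠ 0)).card ≤ 2 := by
    intro i
    have h8 := hSdeg _ (hvmem i)
    have hsplitT := Finset.card_filter_add_card_filter_not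
      (s := T) (p := fun H => ((eS i : ↥S) : Submodule (ZMod 2) (Fin 6 → ZMod 2)) ≤ H)
    have hbij := card_filter_equiv eT
      (fun H => ¬ (((eS i : ↥S) : Submodule (ZMod 2) (Fin 6 → ZMod 2)) ≤ H))
    have hcongr : (Finset.univ.filter (fun j => φ j (v i) ≠ 0)).card
        = ((Finset.univ : Finset (Fin 10)).filter
          (fun j => ¬ (((eS i : ↥S) : Submodule (ZMod 2) (Fin 6 → ZMod 2))
            ≤ ((eT j : ↥T) : Submodule (ZMod 2) (Fin 6 → ZMod 2))))).card := by
      apply card_filter_iff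
      intro j _
      rw [hinc i j]
    rw [hcongr, hbij]
    omega
  have hcol : ∀ j, (Finset.univ.filter (fun i => φ j (v i) ≠ 0)).card ≤ 2 := by
    intro j
    have h8 := hTdeg _ (hφmem j)
    have hsplitS := Finset.card_filter_add_card_filter_not
      (s := S) (p := fun p => p ≤ ((eT j : ↥T) : Submodule (ZMod 2) (Fin 6 → ZMod 2)))
    have hbij := card_filter_equiv eS
      (fun p => ¬ (p ≤ ((eT j : ↥T) : Submodule (ZMod 2) (Fin 6 → ZMod 2))))
    have hcongr : (Finset.univ.filter (fun i => φ j (v i) ≠ 0)).card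
        = ((Finset.univ : Finset (Fin 10)).filter
          (fun i => ¬ (((eS i : ↥S) : Submodule (ZMod 2) (Fin 6 → ZMod 2))
            ≤ ((eT j : ↥T) : Submodule (ZMod 2) (Fin 6 → ZMod 2))))).card := by
      apply card_filter_iff
      intro i _
      rw [hinc i j]
    rw [hcongr, hbij]
    omega
  exact core hUfin v φ hvinj hφinj hv0 hφ0 hrow hcol
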